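/- arXiv:0910.0267 — 4 statements merged into one kernel-verified Lean document; each statement's English description precedes it below -/
import Mathlib

section
/- Let G = A ∗_C B be a nontrivial amalgamated free product (A ≠ C and B ≠ C) and let N be a normal subgroup of G. If the subgroup NC generated by N and C has finite index in G, then N is not contained in C. -/
open Monoid

section Aux

variable {K : Bool → Type*} [∀ i, Group (K i)] (a : K true) (b : K false)

private def altList : ℕ → List (Σ i, K i)
  | 0 => []
  | n + 1 => ⟨true, a⟩ :: ⟨false, b⟩ :: altList n

private theorem altList_mem : ∀ n, ∀ x ∈ altList a b n,
    x = (⟨true, a⟩ : Σ i, K i) ∨ x = (⟨false, b⟩ : Σ i, K i)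
  | 0, x, hx => by simp [altList] at hx
  | n + 1, x, hx => by
    simp only [altList, List.mem_cons] at hx
    rcases hx with rfl | rfl | hx
    · exact Or.inl rfl
    · exact Or.inr rfl
    · exact altList_mem n x hx

private theorem altList_chain : ∀ n,
    List.Chain' (fun l l' : Σ i, K i => l.1 ≠ l'.1) (altList a b n) ∧
    List.Chain' (fun l l' : Σ i, K i => l.1 ≠ l'.1)
      ((⟨false, b⟩ : Σ i, K i) :: altList a b n)
  | 0 => by simp [altList, List.Chain']
  | n + 1 => by
    obtain ⟨h1, h2⟩ := altList_chain n
    refine ⟨?_, ?_⟩ <;>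
    · simp only [altList, List.Chain', List.isChain_cons_cons] at h1 h2 ⊢
      simp_all

variable {H : Type*} [Group H] (φ : ∀ i : Bool, H →* K i)

private theorem altList_prod : ∀ n : ℕ,
    PushoutI.ofCoprodI (φ := φ)
        (List.prod ((altList a b n).map fun l => CoprodI.of l.snd)) =
      (PushoutI.of (φ := φ) true a * PushoutI.of (φ := φ) false b) ^ n
  | 0 => by simp [altList]
  | n + 1 => by
    rw [pow_succ']
    simp only [altList, List.map_cons, List.prod_cons, map_mul, PushoutI.ofCoprodI_of,
      altList_prod n, mul_assoc]

end Aux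

/-- Let `G = A ∗_C B` be a nontrivial amalgamated free product and `N` a normal
subgroup of `G`.  If the subgroup `N ⊔ C` generated by `N` and `C` has finite index in `G`, then
`N` is not contained in `C`. -/
theorem stmt_2 {H : Type*} [Group H] {K : Bool → Type*} [∀ i, Group (K i)]
    (φ : ∀ i, H →* K i) (hφ : ∀ i, Function.Injective (φ i))
    (A B C N : Subgroup (PushoutI φ))
    (hA : A = (PushoutI.of (φ := φ) true).range)
    (hB : B = (PushoutI.of (φ := φ) false).range)
    (hC : C = (PushoutI.base φ).range)
    (hAC : A ≠ C) (hBC : B ≠ C)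
    (hNnorm : N.Normal)
    (hNCidx : (N ⊔ C).FiniteIndex) :
    ¬ N ≤ C := by
  intro hNC
  rw [sup_eq_right.mpr hNC] at hNCidx
  subst hA hB hC
  -- the base is contained in each factor
  have hCA : (PushoutI.base φ).range ≤ (PushoutI.of (φ := φ) true).range := by
    rintro _ ⟨h, rfl⟩
    exact ⟨φ true h, PushoutI.of_apply_eq_base φ true h⟩
  have hCB : (PushoutI.base φ).range ≤ (PushoutI.of (φ := φ) false).range := by
    rintro _ ⟨h, rfl⟩
    exact ⟨φ false h, PushoutI.of_apply_eq_base φ false h⟩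
  -- choose a letter in A outside of C
  obtain ⟨x, hxA, hxC⟩ := SetLike.exists_of_lt (lt_of_le_of_ne hCA (Ne.symm hAC))
  obtain ⟨a, rfl⟩ := hxA
  have ha : a ∉ (φ true).range := by
    rintro ⟨h, rfl⟩
    exact hxC ⟨h, (PushoutI.of_apply_eq_base φ true h).symm⟩
  have ha1 : a ≠ 1 := by rintro rfl; exact ha (one_mem _)
  -- choose a letter in B outside of C
  obtain ⟨y, hyB, hyC⟩ := SetLike.exists_of_lt (lt_of_le_of_ne hCB (Ne.symm hBC))
  obtain ⟨b, rfl⟩ := hyB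
  have hb : b ∉ (φ false).range := by
    rintro ⟨h, rfl⟩
    exact hyC ⟨h, (PushoutI.of_apply_eq_base φ false h).symm⟩
  have hb1 : b ≠ 1 := by rintro rfl; exact hb (one_mem _)
  -- a power of (a * b) lies in C by finite index
  obtain ⟨k, hk0, -, hkmem⟩ := Subgroup.exists_pow_mem_of_index_ne_zero hNCidx.index_ne_zero
    (PushoutI.of (φ := φ) true a * PushoutI.of (φ := φ) false b)
  -- build the corresponding reduced word
  let w : CoprodI.Word K :=
    ⟨altList a b k, fun l hl => by
        rcases altList_mem a b k l hl with rfl | rfl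
        · exact ha1
        · exact hb1,
      (altList_chain a b k).1⟩
  have hred : PushoutI.Reduced φ w := by
    intro g hg
    rcases altList_mem a b k g hg with rfl | rfl
    · exact ha
    · exact hb
  have hmem : PushoutI.ofCoprodI (φ := φ) w.prod ∈ (PushoutI.base φ).range := by
    show PushoutI.ofCoprodI (φ := φ)
      (List.prod ((altList a b k).map fun l => CoprodI.of l.snd)) ∈ _
    rw [altList_prod]
    exact hkmem
  have hempty := hred.eq_empty_of_mem_range hφ hmem
  have : altList a b k = ([] : List (Σ i, K i)) := congrArg CoprodI.Word.toList hempty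
  obtain ⟨k, rfl⟩ := Nat.exists_eq_succ_of_ne_zero hk0.ne'
  simp [altList] at this
end

section
/- Let G = A ∗_C B be a nontrivial amalgamated free product (A ≠ C and B ≠ C) and let N be a normal subgroup of G. If the subgroup NC generated by N and C has finite index in G, and N ∩ A and N ∩ B are finitely generated, then N is finitely generated. -/
open Monoid

open scoped Classical in
/-- A choice of representative for each coset, with the coset of `1` represented by `1`. -/
private noncomputable def srep {G : Type*} [Group G] (M : Subgroup G) (q : G ⧸ M) : G :=
  if q = ((1 : G) : G ⧸ M) then 1 else q.out

private lemma srep_mk {G : Type*} [Group G] (M : Subgroup G) (q : G ⧸ M) :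
    ((srep M q : G) : G ⧸ M) = q := by
  rw [srep]
  split
  · rename_i h; rw [h]
  · exact QuotientGroup.out_eq' q

private lemma srep_one {G : Type*} [Group G] (M : Subgroup G) : srep M ((1 : G) : G ⧸ M) = 1 := by
  rw [srep]; simp

private theorem stmt3_aux {G : Type*} [Group G] (A B C N : Subgroup G)
    (hCA : C ≤ A) (hCB : C ≤ B) (hAB : A ⊔ B = ⊤)
    (hNnorm : N.Normal) (hNCidx : (N ⊔ C).FiniteIndex)
    (hNA : (N ⊓ A).FG) (hNB : (N ⊓ B).FG) : N.FG := by
  classical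
  haveI := hNnorm
  haveI := hNCidx
  haveI idxA : (N ⊔ A).FiniteIndex := Subgroup.finiteIndex_of_le (sup_le_sup_left hCA N)
  haveI idxB : (N ⊔ B).FiniteIndex := Subgroup.finiteIndex_of_le (sup_le_sup_left hCB N)
  obtain ⟨SA, hSAcl, hSAfin⟩ := (Subgroup.fg_iff _).1 hNA
  obtain ⟨SB, hSBcl, hSBfin⟩ := (Subgroup.fg_iff _).1 hNB
  -- decomposition lemma: if `x` and `y` are in the same left coset of `N ⊔ D` then
  -- `y = n * x * d` with `n ∈ N`, `d ∈ D`.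
  have split : ∀ (D : Subgroup G) (x y : G), ((x : G ⧸ (N ⊔ D)) = y) →
      ∃ n ∈ N, ∃ d ∈ D, y = n * x * d := by
    intro D x y h
    rw [QuotientGroup.eq] at h
    rw [← SetLike.mem_coe, Subgroup.normal_mul] at h
    obtain ⟨n, hn, d, hd, hnd⟩ := Set.mem_mul.1 h
    refine ⟨x * n * x⁻¹, hNnorm.conj_mem n hn x, d, hd, ?_⟩
    have hy : y = x * (n * d) := by rw [hnd]; group
    rw [hy]; group
  -- edge elements
  have hch1 : ∀ q : G ⧸ (N ⊔ C), ∃ n ∈ N, ∃ a ∈ A,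
      srep (N ⊔ C) q = n * srep (N ⊔ A) ((srep (N ⊔ C) q : G) : G ⧸ (N ⊔ A)) * a :=
    fun q => split A _ _ (srep_mk (N ⊔ A) _)
  choose n1 hn1N a1 ha1A hspec1 using hch1
  have hch2 : ∀ q : G ⧸ (N ⊔ C), ∃ n ∈ N, ∃ b ∈ B,
      (n1 q)⁻¹ * srep (N ⊔ C) q =
        n * srep (N ⊔ B) ((srep (N ⊔ C) q : G) : G ⧸ (N ⊔ B)) * b := by
    intro q
    apply split B
    rw [srep_mk, QuotientGroup.eq]
    have h1 : (srep (N ⊔ C) q)⁻¹ * ((n1 q)⁻¹ * srep (N ⊔ C) q) =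
        (srep (N ⊔ C) q)⁻¹ * (n1 q)⁻¹ * ((srep (N ⊔ C) q)⁻¹)⁻¹ := by group
    rw [h1]
    exact Subgroup.mem_sup_left (hNnorm.conj_mem _ (N.inv_mem (hn1N q)) _)
  choose n2 hn2N b2 hb2B hspec2 using hch2
  -- the finite generating set
  set X : Set G :=
    ((⋃ q : G ⧸ (N ⊔ A), (fun x => srep (N ⊔ A) q * x * (srep (N ⊔ A) q)⁻¹) '' SA) ∪
     (⋃ q : G ⧸ (N ⊔ B), (fun x => srep (N ⊔ B) q * x * (srep (N ⊔ B) q)⁻¹) '' SB) ∪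
     Set.range n1) ∪ Set.range n2 with hX
  set P : Subgroup G := Subgroup.closure X with hP
  have hXfin : X.Finite := by
    rw [hX]
    exact (((Set.finite_iUnion fun q => hSAfin.image _).union
      (Set.finite_iUnion fun q => hSBfin.image _)).union
      (Set.finite_range n1)).union (Set.finite_range n2)
  have hSAN : ∀ x ∈ SA, x ∈ N ⊓ A := fun x hx => hSAcl ▸ Subgroup.subset_closure hx
  have hSBN : ∀ x ∈ SB, x ∈ N ⊓ B := fun x hx => hSBcl ▸ Subgroup.subset_closure hx
  have hPN : P ≤ N := by
    rw [hP]
    refine (Subgroup.closure_le _).2 ?_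
    intro x hx
    rw [hX] at hx
    simp only [Set.mem_union] at hx
    rcases hx with ((h | h) | h) | h
    · obtain ⟨q, hq⟩ := Set.mem_iUnion.1 h
      obtain ⟨y, hy, rfl⟩ := hq
      exact hNnorm.conj_mem y ((hSAN y hy).1) _
    · obtain ⟨q, hq⟩ := Set.mem_iUnion.1 h
      obtain ⟨y, hy, rfl⟩ := hq
      exact hNnorm.conj_mem y ((hSBN y hy).1) _
    · obtain ⟨q, rfl⟩ := h
      exact hn1N q
    · obtain ⟨q, rfl⟩ := h
      exact hn2N q
  have hn1P : ∀ q, n1 q ∈ P := by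
    intro q
    apply Subgroup.subset_closure
    rw [hX]
    simp only [Set.mem_union]
    exact Or.inl (Or.inr (Set.mem_range_self q))
  have hn2P : ∀ q, n2 q ∈ P := by
    intro q
    apply Subgroup.subset_closure
    rw [hX]
    simp only [Set.mem_union]
    exact Or.inr (Set.mem_range_self q)
  -- conjugates of `N ⊓ A` (resp. `N ⊓ B`) by representatives lie in `P`
  have hconjA : ∀ (q : G ⧸ (N ⊔ A)), ∀ x ∈ N ⊓ A,
      srep (N ⊔ A) q * x * (srep (N ⊔ A) q)⁻¹ ∈ P := by
    intro q x hx
    have hx' : x ∈ Subgroup.closure SA := by rw [hSAcl]; exact hx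
    clear hx
    induction hx' using Subgroup.closure_induction with
    | mem y hy =>
      apply Subgroup.subset_closure
      rw [hX]
      simp only [Set.mem_union]
      exact Or.inl (Or.inl (Or.inl (Set.mem_iUnion.2 ⟨q, ⟨y, hy, rfl⟩⟩)))
    | one => simpa using P.one_mem
    | mul y z hy hz ihy ihz =>
      have h : srep (N ⊔ A) q * (y * z) * (srep (N ⊔ A) q)⁻¹ =
          (srep (N ⊔ A) q * y * (srep (N ⊔ A) q)⁻¹) *
          (srep (N ⊔ A) q * z * (srep (N ⊔ A) q)⁻¹) := by group
      rw [h]; exact P.mul_mem ihy ihz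
    | inv y hy ihy =>
      have h : srep (N ⊔ A) q * y⁻¹ * (srep (N ⊔ A) q)⁻¹ =
          (srep (N ⊔ A) q * y * (srep (N ⊔ A) q)⁻¹)⁻¹ := by group
      rw [h]; exact P.inv_mem ihy
  have hconjB : ∀ (q : G ⧸ (N ⊔ B)), ∀ x ∈ N ⊓ B,
      srep (N ⊔ B) q * x * (srep (N ⊔ B) q)⁻¹ ∈ P := by
    intro q x hx
    have hx' : x ∈ Subgroup.closure SB := by rw [hSBcl]; exact hx
    clear hx
    induction hx' using Subgroup.closure_induction with
    | mem y hy =>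
      apply Subgroup.subset_closure
      rw [hX]
      simp only [Set.mem_union]
      exact Or.inl (Or.inl (Or.inr (Set.mem_iUnion.2 ⟨q, ⟨y, hy, rfl⟩⟩)))
    | one => simpa using P.one_mem
    | mul y z hy hz ihy ihz =>
      have h : srep (N ⊔ B) q * (y * z) * (srep (N ⊔ B) q)⁻¹ =
          (srep (N ⊔ B) q * y * (srep (N ⊔ B) q)⁻¹) *
          (srep (N ⊔ B) q * z * (srep (N ⊔ B) q)⁻¹) := by group
      rw [h]; exact P.mul_mem ihy ihz
    | inv y hy ihy =>
      have h : srep (N ⊔ B) q * y⁻¹ * (srep (N ⊔ B) q)⁻¹ =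
          (srep (N ⊔ B) q * y * (srep (N ⊔ B) q)⁻¹)⁻¹ := by group
      rw [h]; exact P.inv_mem ihy
  -- the coset of `g` determines the representative in a product decomposition
  have hrep : ∀ (D : Subgroup G) (g p : G), p ∈ N → ∀ (q : G ⧸ (N ⊔ D)), ∀ a ∈ D,
      g = p * srep (N ⊔ D) q * a → ((g : G ⧸ (N ⊔ D))) = q := by
    intro D g p hp q a ha hg
    have h : ((srep (N ⊔ D) q : G) : G ⧸ (N ⊔ D)) = (g : G ⧸ (N ⊔ D)) := by
      rw [QuotientGroup.eq, hg]
      have h1 : (srep (N ⊔ D) q)⁻¹ * (p * srep (N ⊔ D) q * a) =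
          ((srep (N ⊔ D) q)⁻¹ * p * ((srep (N ⊔ D) q)⁻¹)⁻¹) * a := by group
      rw [h1]
      exact mul_mem (Subgroup.mem_sup_left (hNnorm.conj_mem p hp _))
        (Subgroup.mem_sup_right ha)
    rw [← h, srep_mk]
  -- Claim: membership in the `A`-side region implies membership in the `B`-side region
  have claimAB : ∀ g : G,
      (∃ p ∈ P, ∃ q : G ⧸ (N ⊔ A), ∃ a ∈ A, g = p * srep (N ⊔ A) q * a) →
      (∃ p ∈ P, ∃ q : G ⧸ (N ⊔ B), ∃ b ∈ B, g = p * srep (N ⊔ B) q * b) := by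
    rintro g ⟨p, hp, qa, a, ha, hg⟩
    set qc := ((g : G ⧸ (N ⊔ C))) with hqc
    set t := srep (N ⊔ C) qc with ht
    obtain ⟨n, hn, c, hc, hgtc⟩ := split C t g (by rw [ht, srep_mk, hqc])
    have hta : ((t : G ⧸ (N ⊔ A))) = ((g : G ⧸ (N ⊔ A))) := by
      rw [QuotientGroup.eq, hgtc]
      have h1 : t⁻¹ * (n * t * c) = (t⁻¹ * n * (t⁻¹)⁻¹) * c := by group
      rw [h1]
      exact mul_mem (Subgroup.mem_sup_left (hNnorm.conj_mem n hn _))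
        (Subgroup.mem_sup_right (hCA hc))
    have hga : ((g : G ⧸ (N ⊔ A))) = qa := hrep A g p (hPN hp) qa a ha hg
    have hd : srep (N ⊔ A) ((t : G ⧸ (N ⊔ A))) = srep (N ⊔ A) qa := by rw [hta, hga]
    have hs1 : t = n1 qc * srep (N ⊔ A) qa * a1 qc := by
      have h := hspec1 (qc)
      rw [← ht, hd] at h
      exact h
    have hw : p⁻¹ * (n * n1 qc) =
        srep (N ⊔ A) qa * (a * c⁻¹ * (a1 qc)⁻¹) * (srep (N ⊔ A) qa)⁻¹ := by
      have h3 : n * n1 qc =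
          g * c⁻¹ * (a1 qc)⁻¹ * (srep (N ⊔ A) qa)⁻¹ := by
        rw [hgtc, hs1]; group
      rw [h3, hg]; group
    have hwN : p⁻¹ * (n * n1 qc) ∈ N :=
      mul_mem (N.inv_mem (hPN hp)) (mul_mem hn (hn1N _))
    have hαA : a * c⁻¹ * (a1 qc)⁻¹ ∈ A :=
      mul_mem (mul_mem ha (A.inv_mem (hCA hc))) (A.inv_mem (ha1A _))
    have hαN : a * c⁻¹ * (a1 qc)⁻¹ ∈ N := by
      have heq : a * c⁻¹ * (a1 qc)⁻¹ =
          (srep (N ⊔ A) qa)⁻¹ * (p⁻¹ * (n * n1 qc)) * ((srep (N ⊔ A) qa)⁻¹)⁻¹ := by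
        rw [hw]; group
      rw [heq]
      exact hNnorm.conj_mem _ hwN _
    have hwP : p⁻¹ * (n * n1 qc) ∈ P := by
      rw [hw]; exact hconjA qa _ ⟨hαN, hαA⟩
    have hnnP : n * n1 qc ∈ P := by
      have h := P.mul_mem hp hwP
      simpa using h
    have hs2 := hspec2 (qc)
    rw [← ht] at hs2
    refine ⟨n * n1 qc * n2 qc,
      P.mul_mem hnnP (hn2P _), ((t : G ⧸ (N ⊔ B))),
      b2 qc * c, mul_mem (hb2B _) (hCB hc), ?_⟩
    set e := srep (N ⊔ B) ((t : G ⧸ (N ⊔ B))) with he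
    have htexp : t = n1 qc *
        (n2 qc * e * b2 qc) := by
      rw [← hs2]; group
    rw [hgtc, htexp]; group
  -- Claim: membership in the `B`-side region implies membership in the `A`-side region
  have claimBA : ∀ g : G,
      (∃ p ∈ P, ∃ q : G ⧸ (N ⊔ B), ∃ b ∈ B, g = p * srep (N ⊔ B) q * b) →
      (∃ p ∈ P, ∃ q : G ⧸ (N ⊔ A), ∃ a ∈ A, g = p * srep (N ⊔ A) q * a) := by
    rintro g ⟨p, hp, qb, b, hb, hg⟩
    set qc := ((g : G ⧸ (N ⊔ C))) with hqc
    set t := srep (N ⊔ C) qc with ht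
    obtain ⟨n, hn, c, hc, hgtc⟩ := split C t g (by rw [ht, srep_mk, hqc])
    have htb : ((t : G ⧸ (N ⊔ B))) = ((g : G ⧸ (N ⊔ B))) := by
      rw [QuotientGroup.eq, hgtc]
      have h1 : t⁻¹ * (n * t * c) = (t⁻¹ * n * (t⁻¹)⁻¹) * c := by group
      rw [h1]
      exact mul_mem (Subgroup.mem_sup_left (hNnorm.conj_mem n hn _))
        (Subgroup.mem_sup_right (hCB hc))
    have hgb : ((g : G ⧸ (N ⊔ B))) = qb := hrep B g p (hPN hp) qb b hb hg
    have hd2 : srep (N ⊔ B) ((t : G ⧸ (N ⊔ B))) = srep (N ⊔ B) qb := by rw [htb, hgb]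
    have hs2 : (n1 qc)⁻¹ * t =
        n2 qc * srep (N ⊔ B) qb * b2 qc := by
      have h := hspec2 (qc)
      rw [← ht, hd2] at h
      exact h
    have htexp : t = n1 qc *
        (n2 qc * srep (N ⊔ B) qb * b2 qc) := by
      rw [← hs2]; group
    have hw : p⁻¹ * (n * n1 qc * n2 qc) =
        srep (N ⊔ B) qb * (b * c⁻¹ * (b2 qc)⁻¹) * (srep (N ⊔ B) qb)⁻¹ := by
      have h3 : n * n1 qc * n2 qc =
          g * c⁻¹ * (b2 qc)⁻¹ * (srep (N ⊔ B) qb)⁻¹ := by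
        rw [hgtc, htexp]; group
      rw [h3, hg]; group
    have hwN : p⁻¹ * (n * n1 qc * n2 qc) ∈ N :=
      mul_mem (N.inv_mem (hPN hp)) (mul_mem (mul_mem hn (hn1N _)) (hn2N _))
    have hβB : b * c⁻¹ * (b2 qc)⁻¹ ∈ B :=
      mul_mem (mul_mem hb (B.inv_mem (hCB hc))) (B.inv_mem (hb2B _))
    have hβN : b * c⁻¹ * (b2 qc)⁻¹ ∈ N := by
      have heq : b * c⁻¹ * (b2 qc)⁻¹ =
          (srep (N ⊔ B) qb)⁻¹ * (p⁻¹ * (n * n1 qc * n2 qc)) *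
            ((srep (N ⊔ B) qb)⁻¹)⁻¹ := by
        rw [hw]; group
      rw [heq]
      exact hNnorm.conj_mem _ hwN _
    have hwP : p⁻¹ * (n * n1 qc * n2 qc) ∈ P := by
      rw [hw]; exact hconjB qb _ ⟨hβN, hβB⟩
    have h3P : n * n1 qc * n2 qc ∈ P := by
      have h := P.mul_mem hp hwP
      simpa using h
    have hnnP : n * n1 qc ∈ P := by
      have h := P.mul_mem h3P (P.inv_mem (hn2P qc))
      simpa using h
    have hs1 := hspec1 (qc)
    rw [← ht] at hs1
    refine ⟨n * n1 qc, hnnP, ((t : G ⧸ (N ⊔ A))),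
      a1 qc * c, mul_mem (ha1A _) (hCA hc), ?_⟩
    set e := srep (N ⊔ A) ((t : G ⧸ (N ⊔ A))) with he
    rw [hgtc, hs1]; group
  -- the main induction: every element of `G` is in both regions
  have hΨ : ∀ g : G,
      (∃ p ∈ P, ∃ q : G ⧸ (N ⊔ A), ∃ a ∈ A, g = p * srep (N ⊔ A) q * a) ∧
      (∃ p ∈ P, ∃ q : G ⧸ (N ⊔ B), ∃ b ∈ B, g = p * srep (N ⊔ B) q * b) := by
    have h1 : (∃ p ∈ P, ∃ q : G ⧸ (N ⊔ A), ∃ a ∈ A, (1 : G) = p * srep (N ⊔ A) q * a) ∧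
        (∃ p ∈ P, ∃ q : G ⧸ (N ⊔ B), ∃ b ∈ B, (1 : G) = p * srep (N ⊔ B) q * b) := by
      constructor
      · exact ⟨1, P.one_mem, ((1 : G) : G ⧸ (N ⊔ A)), 1, A.one_mem, by rw [srep_one]; simp⟩
      · exact ⟨1, P.one_mem, ((1 : G) : G ⧸ (N ⊔ B)), 1, B.one_mem, by rw [srep_one]; simp⟩
    have stepA : ∀ s ∈ A, ∀ g₀ : G,
        ((∃ p ∈ P, ∃ q : G ⧸ (N ⊔ A), ∃ a ∈ A, g₀ = p * srep (N ⊔ A) q * a) ∧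
         (∃ p ∈ P, ∃ q : G ⧸ (N ⊔ B), ∃ b ∈ B, g₀ = p * srep (N ⊔ B) q * b)) →
        ((∃ p ∈ P, ∃ q : G ⧸ (N ⊔ A), ∃ a ∈ A, g₀ * s = p * srep (N ⊔ A) q * a) ∧
         (∃ p ∈ P, ∃ q : G ⧸ (N ⊔ B), ∃ b ∈ B, g₀ * s = p * srep (N ⊔ B) q * b)) := by
      rintro s hs g₀ ⟨⟨p, hp, q, a, ha, hg0⟩, -⟩
      have hUA : ∃ p ∈ P, ∃ q : G ⧸ (N ⊔ A), ∃ a ∈ A, g₀ * s = p * srep (N ⊔ A) q * a :=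
        ⟨p, hp, q, a * s, mul_mem ha hs, by rw [hg0]; group⟩
      exact ⟨hUA, claimAB _ hUA⟩
    have stepB : ∀ s ∈ B, ∀ g₀ : G,
        ((∃ p ∈ P, ∃ q : G ⧸ (N ⊔ A), ∃ a ∈ A, g₀ = p * srep (N ⊔ A) q * a) ∧
         (∃ p ∈ P, ∃ q : G ⧸ (N ⊔ B), ∃ b ∈ B, g₀ = p * srep (N ⊔ B) q * b)) →
        ((∃ p ∈ P, ∃ q : G ⧸ (N ⊔ A), ∃ a ∈ A, g₀ * s = p * srep (N ⊔ A) q * a) ∧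
         (∃ p ∈ P, ∃ q : G ⧸ (N ⊔ B), ∃ b ∈ B, g₀ * s = p * srep (N ⊔ B) q * b)) := by
      rintro s hs g₀ ⟨-, ⟨p, hp, q, b, hb, hg0⟩⟩
      have hUB : ∃ p ∈ P, ∃ q : G ⧸ (N ⊔ B), ∃ b ∈ B, g₀ * s = p * srep (N ⊔ B) q * b :=
        ⟨p, hp, q, b * s, mul_mem hb hs, by rw [hg0]; group⟩
      exact ⟨claimBA _ hUB, hUB⟩
    have key : ∀ g : G, ∀ g₀ : G,
        ((∃ p ∈ P, ∃ q : G ⧸ (N ⊔ A), ∃ a ∈ A, g₀ = p * srep (N ⊔ A) q * a) ∧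
         (∃ p ∈ P, ∃ q : G ⧸ (N ⊔ B), ∃ b ∈ B, g₀ = p * srep (N ⊔ B) q * b)) ↔
        ((∃ p ∈ P, ∃ q : G ⧸ (N ⊔ A), ∃ a ∈ A, g₀ * g = p * srep (N ⊔ A) q * a) ∧
         (∃ p ∈ P, ∃ q : G ⧸ (N ⊔ B), ∃ b ∈ B, g₀ * g = p * srep (N ⊔ B) q * b)) := by
      intro g
      have hg : g ∈ Subgroup.closure ((A : Set G) ∪ (B : Set G)) := by
        rw [← Subgroup.sup_eq_closure, hAB]; trivial
      induction hg using Subgroup.closure_induction with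
      | mem s hs =>
        intro g₀
        rcases hs with hsa | hsb
        · constructor
          · exact stepA s hsa g₀
          · intro h
            have h' := stepA s⁻¹ (A.inv_mem hsa) (g₀ * s) h
            simpa using h'
        · constructor
          · exact stepB s hsb g₀
          · intro h
            have h' := stepB s⁻¹ (B.inv_mem hsb) (g₀ * s) h
            simpa using h'
      | one => intro g₀; simp
      | mul x y hx hy ihx ihy =>
        intro g₀
        have h := (ihx g₀).trans (ihy (g₀ * x))
        simpa [mul_assoc] using h
      | inv x hx ihx =>
        intro g₀
        have h := ihx (g₀ * x⁻¹)
        simp only [inv_mul_cancel_right] at h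
        exact h.symm
    intro g
    have h := (key g 1).1 h1
    simpa using h
  -- conclude
  have hNleP : N ≤ P := by
    intro n hnN
    obtain ⟨⟨p, hp, q, a, ha, hneq⟩, -⟩ := hΨ n
    have hq : q = ((1 : G) : G ⧸ (N ⊔ A)) := by
      have h1 : ((n : G ⧸ (N ⊔ A))) = q := hrep A n p (hPN hp) q a ha hneq
      have h2 : ((n : G ⧸ (N ⊔ A))) = ((1 : G) : G ⧸ (N ⊔ A)) := by
        rw [QuotientGroup.eq]
        simpa using Subgroup.mem_sup_left (N.inv_mem hnN)
      rw [← h1, h2]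
    rw [hq, srep_one] at hneq
    have haN : a ∈ N := by
      have h : a = p⁻¹ * n := by rw [hneq]; group
      rw [h]; exact mul_mem (N.inv_mem (hPN hp)) hnN
    have haP : a ∈ P := by
      have h := hconjA ((1 : G) : G ⧸ (N ⊔ A)) a ⟨haN, ha⟩
      rw [srep_one] at h
      simpa using h
    have h : n = p * a := by rw [hneq]; group
    rw [h]
    exact P.mul_mem hp haP
  refine (Subgroup.fg_iff N).2 ⟨X, ?_, hXfin⟩
  rw [← hP]
  exact le_antisymm hPN hNleP

/-- Let `G = A ∗_C B` be a nontrivial amalgamated free product and `N` a normal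
subgroup of `G`.  If the subgroup `N ⊔ C` generated by `N` and `C` has finite index in `G`, and
`N ⊓ A` and `N ⊓ B` are finitely generated, then `N` is finitely generated. -/
theorem stmt_3 {H : Type*} [Group H] {K : Bool → Type*} [∀ i, Group (K i)]
    (φ : ∀ i, H →* K i) (hφ : ∀ i, Function.Injective (φ i))
    (A B C N : Subgroup (PushoutI φ))
    (hA : A = (PushoutI.of (φ := φ) true).range)
    (hB : B = (PushoutI.of (φ := φ) false).range)
    (hC : C = (PushoutI.base φ).range)
    (hAC : A ≠ C) (hBC : B ≠ C)
    (hNnorm : N.Normal)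
    (hNCidx : (N ⊔ C).FiniteIndex)
    (hNA : (N ⊓ A).FG) (hNB : (N ⊓ B).FG) :
    N.FG := by
  have hCA : C ≤ A := by
    rw [hC, hA]
    rintro x ⟨h, rfl⟩
    exact ⟨φ true h, PushoutI.of_apply_eq_base φ true h⟩
  have hCB : C ≤ B := by
    rw [hC, hB]
    rintro x ⟨h, rfl⟩
    exact ⟨φ false h, PushoutI.of_apply_eq_base φ false h⟩
  have hAB : A ⊔ B = ⊤ := by
    rw [eq_top_iff]
    intro x hx
    clear hx
    induction x using PushoutI.induction_on with
    | of i g =>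
      cases i with
      | false => exact Subgroup.mem_sup_right (by rw [hB]; exact ⟨g, rfl⟩)
      | true => exact Subgroup.mem_sup_left (by rw [hA]; exact ⟨g, rfl⟩)
    | base h =>
      exact Subgroup.mem_sup_left
        (by rw [hA]; exact ⟨φ true h, PushoutI.of_apply_eq_base φ true h⟩)
    | mul x y hx hy => exact mul_mem hx hy
  exact stmt3_aux A B C N hCA hCB hAB hNnorm hNCidx hNA hNB
end

section
/- Let G = A∗_C be an HNN extension with base group A, associated subgroups C and D, and stable letter t, and let N be a normal subgroup of G. If the subgroup NC generated by N and C has finite index in G and N ∩ A is finitely generated, then N is finitely generated. -/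
open Pointwise

/-- Auxiliary general lemma: if `G` is generated by a subgroup `Ab` together with an
element `t` such that `t * Cb * t⁻¹ ⊆ Ab` for a subgroup `Cb ≤ Ab`, `N` is a normal
subgroup such that `N ⊔ Cb` has finite index and `N ⊓ Ab` is finitely generated, then
`N` is finitely generated. -/
theorem stmt_7_aux {G : Type*} [Group G] (Ab Cb : Subgroup G) (t : G)
    (hCA : Cb ≤ Ab)
    (hconj : ∀ c ∈ Cb, t * c * t⁻¹ ∈ Ab)
    (hgen : ∀ g : G, g ∈ Subgroup.closure (↑Ab ∪ {t}))
    (N : Subgroup G) (hN : N.Normal)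
    (hidx : (N ⊔ Cb).FiniteIndex)
    (hNA : (N ⊓ Ab).FG) : N.FG := by
  classical
  set H0 := N ⊔ Cb with hH0def
  set H1 := N ⊔ Ab with hH1def
  have h01 : H0 ≤ H1 := sup_le_sup_left hCA N
  have hNH1 : N ≤ H1 := le_sup_left
  have hAH1 : Ab ≤ H1 := le_sup_right
  haveI : H0.FiniteIndex := hidx
  haveI : H1.FiniteIndex := Subgroup.finiteIndex_of_le h01
  -- representatives of cosets of H1, with the trivial coset represented by 1
  set vrep : G ⧸ H1 → G := fun q => if q = QuotientGroup.mk (1 : G) then 1 else q.out with hvrepdef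
  have hvrep : ∀ q, QuotientGroup.mk (vrep q) = q := by
    intro q
    by_cases h : q = QuotientGroup.mk (1 : G)
    · simp [hvrepdef, h]
    · simp [hvrepdef, h, QuotientGroup.out_eq']
  have hvrep1 : vrep (QuotientGroup.mk (1 : G)) = 1 := by simp [hvrepdef]
  set erep : G ⧸ H0 → G := fun q => q.out with herepdef
  have herep : ∀ q, QuotientGroup.mk (erep q) = q := fun q => QuotientGroup.out_eq' q
  -- decomposition functions
  have key1 : ∀ g : G, ∃ n a, n ∈ N ∧ a ∈ Ab ∧ g = n * vrep (QuotientGroup.mk g) * a := by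
    intro g
    have h : (vrep (QuotientGroup.mk g))⁻¹ * g ∈ H1 := by
      rw [← QuotientGroup.eq, hvrep]
    have h' : (vrep (QuotientGroup.mk g))⁻¹ * g ∈ ((N : Set G) * (Ab : Set G)) := by
      rw [← Subgroup.normal_mul, ← hH1def, SetLike.mem_coe]; exact h
    obtain ⟨n', hn', a, ha, hna⟩ := h'
    refine ⟨vrep (QuotientGroup.mk g) * n' * (vrep (QuotientGroup.mk g))⁻¹, a,
      hN.conj_mem n' hn' _, ha, ?_⟩
    have hna' : n' * a = (vrep (QuotientGroup.mk g))⁻¹ * g := hna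
    have h2 : vrep (QuotientGroup.mk g) * (n' * a) = g := by
      rw [hna']; group
    calc g = vrep (QuotientGroup.mk g) * (n' * a) := h2.symm
      _ = vrep (QuotientGroup.mk g) * n' * (vrep (QuotientGroup.mk g))⁻¹ *
            vrep (QuotientGroup.mk g) * a := by group
  choose nf af hnf haf hgf using key1
  have key0 : ∀ g : G, ∃ n c, n ∈ N ∧ c ∈ Cb ∧ g = n * erep (QuotientGroup.mk g) * c := by
    intro g
    have h : (erep (QuotientGroup.mk g))⁻¹ * g ∈ H0 := by
      rw [← QuotientGroup.eq, herep]
    have h' : (erep (QuotientGroup.mk g))⁻¹ * g ∈ ((N : Set G) * (Cb : Set G)) := by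
      rw [← Subgroup.normal_mul, ← hH0def, SetLike.mem_coe]; exact h
    obtain ⟨n', hn', c, hc, hnc⟩ := h'
    refine ⟨erep (QuotientGroup.mk g) * n' * (erep (QuotientGroup.mk g))⁻¹, c,
      hN.conj_mem n' hn' _, hc, ?_⟩
    have hnc' : n' * c = (erep (QuotientGroup.mk g))⁻¹ * g := hnc
    have h2 : erep (QuotientGroup.mk g) * (n' * c) = g := by
      rw [hnc']; group
    calc g = erep (QuotientGroup.mk g) * (n' * c) := h2.symm
      _ = erep (QuotientGroup.mk g) * n' * (erep (QuotientGroup.mk g))⁻¹ *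
            erep (QuotientGroup.mk g) * c := by group
  choose n0 c0 hn0 hc0 hg0 using key0
  -- uniqueness of representatives
  have huniq : ∀ (q q' : G ⧸ H1) (a : G), a ∈ Ab → vrep q * a * (vrep q')⁻¹ ∈ N → q = q' := by
    intro q q' a ha hmem
    rw [← hvrep q, ← hvrep q', QuotientGroup.eq]
    have h2 : (vrep q)⁻¹ * vrep q' =
        ((vrep q)⁻¹ * (vrep q * a * (vrep q')⁻¹)⁻¹ * ((vrep q)⁻¹)⁻¹) * a := by group
    rw [h2]
    exact mul_mem (hNH1 (hN.conj_mem _ (inv_mem hmem) (vrep q)⁻¹)) (hAH1 ha)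
  -- the finite generating set
  obtain ⟨Sa, hSa⟩ := hNA
  set Fgen : G ⧸ H0 → G := fun r => (nf (erep r))⁻¹ * nf (erep r * t⁻¹) with hFgendef
  set S : Set G :=
    (⋃ q : G ⧸ H1, (fun x => vrep q * x * (vrep q)⁻¹) '' (Sa : Set G)) ∪ Set.range Fgen
    with hSdef
  set H := Subgroup.closure S with hHdef
  have hSfin : S.Finite :=
    Set.Finite.union (Set.finite_iUnion fun q => Sa.finite_toSet.image _) (Set.finite_range _)
  -- conjugated vertex groups lie in H
  have hconjH : ∀ (q : G ⧸ H1) (x : G), x ∈ N → x ∈ Ab → vrep q * x * (vrep q)⁻¹ ∈ H := by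
    intro q x hx1 hx2
    have hx : x ∈ Subgroup.closure (Sa : Set G) := by
      rw [hSa]; exact ⟨hx1, hx2⟩
    clear hx1 hx2
    induction hx using Subgroup.closure_induction with
    | mem y hy =>
        exact Subgroup.subset_closure (Or.inl (Set.mem_iUnion.2 ⟨q, ⟨y, hy, rfl⟩⟩))
    | one => simpa using one_mem H
    | mul y z hy hz hy' hz' =>
        have h2 : vrep q * (y * z) * (vrep q)⁻¹ =
            (vrep q * y * (vrep q)⁻¹) * (vrep q * z * (vrep q)⁻¹) := by group
        rw [h2]; exact mul_mem hy' hz'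
    | inv y hy hy' =>
        have h2 : vrep q * y⁻¹ * (vrep q)⁻¹ = (vrep q * y * (vrep q)⁻¹)⁻¹ := by group
        rw [h2]; exact inv_mem hy'
  have hFgenH : ∀ r : G ⧸ H0, Fgen r ∈ H :=
    fun r => Subgroup.subset_closure (Or.inr ⟨r, rfl⟩)
  -- H ≤ N
  have hHN : H ≤ N := by
    rw [hHdef, Subgroup.closure_le]
    rintro x (hx | ⟨r, rfl⟩)
    · obtain ⟨q, hq⟩ := Set.mem_iUnion.1 hx
      obtain ⟨y, hy, rfl⟩ := hq
      have hyN : y ∈ N ⊓ Ab := by rw [← hSa]; exact Subgroup.subset_closure hy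
      exact SetLike.mem_coe.mpr (hN.conj_mem y hyN.1 _)
    · exact SetLike.mem_coe.mpr (mul_mem (inv_mem (hnf _)) (hnf _))
  -- the core lemma for `t⁻¹`
  have coreTinv : ∀ (q : G ⧸ H1) (b : G), b ∈ Ab →
      ∃ h ∈ H, ∃ q', ∃ a ∈ Ab, vrep q * b * t⁻¹ = h * vrep q' * a := by
    intro q b hb
    set r : G ⧸ H0 := QuotientGroup.mk (vrep q * b) with hr
    obtain ⟨e, n₀, c, nE, bE, mE, aE, hn₀, hcC, hnEN, hbEA, hmEN, haEA,
        hdecg, hdece, hdecet, hFgenr⟩ :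
        ∃ e n₀ c nE bE mE aE, n₀ ∈ N ∧ c ∈ Cb ∧ nE ∈ N ∧ bE ∈ Ab ∧ mE ∈ N ∧ aE ∈ Ab ∧
          vrep q * b = n₀ * e * c ∧ e = nE * vrep (QuotientGroup.mk e) * bE ∧
          e * t⁻¹ = mE * vrep (QuotientGroup.mk (e * t⁻¹)) * aE ∧ Fgen r = nE⁻¹ * mE :=
      ⟨erep r, _, _, _, _, _, _, hn0 _, hc0 _, hnf _, haf _, hnf _, haf _,
        hg0 _, hgf _, hgf _, rfl⟩
    set u := vrep (QuotientGroup.mk e) with hu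
    set w := vrep (QuotientGroup.mk (e * t⁻¹)) with hw
    set d := t * c * t⁻¹ with hd
    have hdA : d ∈ Ab := hconj _ hcC
    have h1 : vrep q * (b * c⁻¹ * bE⁻¹) * u⁻¹ = n₀ * nE := by
      have h1a : n₀ = vrep q * b * c⁻¹ * e⁻¹ := by rw [hdecg]; group
      rw [h1a, hdece]; group
    have hmemN : vrep q * (b * c⁻¹ * bE⁻¹) * u⁻¹ ∈ N := by
      rw [h1]; exact mul_mem hn₀ hnEN
    have haA : b * c⁻¹ * bE⁻¹ ∈ Ab :=
      mul_mem (mul_mem hb (inv_mem (hCA hcC))) (inv_mem hbEA)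
    have hq : q = QuotientGroup.mk e := huniq q _ _ haA hmemN
    have huv : vrep q = u := by rw [hq]
    rw [← huv] at hmemN
    have hxN : b * c⁻¹ * bE⁻¹ ∈ N := by
      have h2 : (vrep q)⁻¹ * (vrep q * (b * c⁻¹ * bE⁻¹) * (vrep q)⁻¹) * ((vrep q)⁻¹)⁻¹ ∈ N :=
        hN.conj_mem _ hmemN _
      have h3 : b * c⁻¹ * bE⁻¹ =
          (vrep q)⁻¹ * (vrep q * (b * c⁻¹ * bE⁻¹) * (vrep q)⁻¹) * ((vrep q)⁻¹)⁻¹ := by group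
      rw [h3]; exact h2
    have hg1 : vrep q * (b * c⁻¹ * bE⁻¹) * (vrep q)⁻¹ ∈ H := hconjH q _ hxN haA
    have hh : n₀ * mE ∈ H := by
      have h3 : n₀ * mE = (vrep q * (b * c⁻¹ * bE⁻¹) * (vrep q)⁻¹) * Fgen r := by
        rw [hFgenr]
        have h4 : n₀ = vrep q * (b * c⁻¹ * bE⁻¹) * u⁻¹ * nE⁻¹ := by rw [h1]; group
        rw [h4, ← huv]; group
      rw [h3]; exact mul_mem hg1 (hFgenH r)
    refine ⟨n₀ * mE, hh, QuotientGroup.mk (e * t⁻¹), aE * d, mul_mem haEA hdA, ?_⟩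
    have h5 : vrep q * b * t⁻¹ = n₀ * (e * t⁻¹) * d := by rw [hdecg, hd]; group
    rw [← hw, h5, hdecet]; group
  -- the core lemma for `t`
  have coreT : ∀ (q : G ⧸ H1) (b : G), b ∈ Ab →
      ∃ h ∈ H, ∃ q', ∃ a ∈ Ab, vrep q * b * t = h * vrep q' * a := by
    intro q b hb
    set r : G ⧸ H0 := QuotientGroup.mk (vrep q * b * t) with hr
    obtain ⟨e, n₀, c, nE, bE, mE, aE, hn₀, hcC, hnEN, hbEA, hmEN, haEA,
        hdecg, hdece, hdecet, hFgenr⟩ :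
        ∃ e n₀ c nE bE mE aE, n₀ ∈ N ∧ c ∈ Cb ∧ nE ∈ N ∧ bE ∈ Ab ∧ mE ∈ N ∧ aE ∈ Ab ∧
          vrep q * b * t = n₀ * e * c ∧ e = nE * vrep (QuotientGroup.mk e) * bE ∧
          e * t⁻¹ = mE * vrep (QuotientGroup.mk (e * t⁻¹)) * aE ∧ Fgen r = nE⁻¹ * mE :=
      ⟨erep r, _, _, _, _, _, _, hn0 _, hc0 _, hnf _, haf _, hnf _, haf _,
        hg0 _, hgf _, hgf _, rfl⟩
    set u := vrep (QuotientGroup.mk e) with hu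
    set w := vrep (QuotientGroup.mk (e * t⁻¹)) with hw
    set d := t * c⁻¹ * t⁻¹ with hd
    have hdA : d ∈ Ab := hconj _ (inv_mem hcC)
    have h0 : n₀ = vrep q * b * t * c⁻¹ * e⁻¹ := by rw [hdecg]; group
    have h1b : n₀ * mE = vrep q * b * d * (e * t⁻¹)⁻¹ * mE := by rw [h0, hd]; group
    rw [hdecet] at h1b
    have h1 : vrep q * (b * d * aE⁻¹) * w⁻¹ = n₀ * mE := by rw [h1b]; group
    have hmemN : vrep q * (b * d * aE⁻¹) * w⁻¹ ∈ N := by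
      rw [h1]; exact mul_mem hn₀ hmEN
    have haA : b * d * aE⁻¹ ∈ Ab := mul_mem (mul_mem hb hdA) (inv_mem haEA)
    have hq : q = QuotientGroup.mk (e * t⁻¹) := huniq q _ _ haA hmemN
    have hwv : vrep q = w := by rw [hq]
    rw [← hwv] at hmemN
    have hxN : b * d * aE⁻¹ ∈ N := by
      have h2 : (vrep q)⁻¹ * (vrep q * (b * d * aE⁻¹) * (vrep q)⁻¹) * ((vrep q)⁻¹)⁻¹ ∈ N :=
        hN.conj_mem _ hmemN _
      have h3 : b * d * aE⁻¹ =
          (vrep q)⁻¹ * (vrep q * (b * d * aE⁻¹) * (vrep q)⁻¹) * ((vrep q)⁻¹)⁻¹ := by group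
      rw [h3]; exact h2
    have hg1 : vrep q * (b * d * aE⁻¹) * (vrep q)⁻¹ ∈ H := hconjH q _ hxN haA
    have hh : n₀ * nE ∈ H := by
      have h3 : n₀ * nE = (vrep q * (b * d * aE⁻¹) * (vrep q)⁻¹) * (Fgen r)⁻¹ := by
        rw [hFgenr]
        have h4 : n₀ = vrep q * (b * d * aE⁻¹) * w⁻¹ * mE⁻¹ := by rw [h1]; group
        rw [h4, ← hwv]; group
      rw [h3]; exact mul_mem hg1 (inv_mem (hFgenH r))
    refine ⟨n₀ * nE, hh, QuotientGroup.mk e, bE * c, mul_mem hbEA (hCA hcC), ?_⟩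
    rw [← hu, hdecg, hdece]; group
  -- the set M
  set M : Set G := {x | ∃ h ∈ H, ∃ q, ∃ a ∈ Ab, x = h * vrep q * a} with hMdef
  have honeM : (1 : G) ∈ M :=
    ⟨1, one_mem H, QuotientGroup.mk (1 : G), 1, one_mem Ab, by rw [hvrep1]; group⟩
  have hstepA : ∀ x ∈ M, ∀ a ∈ Ab, x * a ∈ M := by
    rintro x ⟨h, hh, q, a', ha', rfl⟩ a ha
    exact ⟨h, hh, q, a' * a, mul_mem ha' ha, by group⟩
  have hstepT : ∀ x ∈ M, x * t ∈ M := by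
    rintro x ⟨h, hh, q, a', ha', rfl⟩
    obtain ⟨h2, hh2, q', a2, ha2, heq⟩ := coreT q a' ha'
    refine ⟨h * h2, mul_mem hh hh2, q', a2, ha2, ?_⟩
    have h5 : h * vrep q * a' * t = h * (vrep q * a' * t) := by group
    rw [h5, heq]; group
  have hstepTinv : ∀ x ∈ M, x * t⁻¹ ∈ M := by
    rintro x ⟨h, hh, q, a', ha', rfl⟩
    obtain ⟨h2, hh2, q', a2, ha2, heq⟩ := coreTinv q a' ha'
    refine ⟨h * h2, mul_mem hh hh2, q', a2, ha2, ?_⟩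
    have h5 : h * vrep q * a' * t⁻¹ = h * (vrep q * a' * t⁻¹) := by group
    rw [h5, heq]; group
  -- every element of G is in M
  have hM : ∀ x : G, x ∈ M := by
    have hlist : ∀ (L : List G), (∀ y ∈ L, y ∈ (↑Ab ∪ {t} : Set G) ∪ (↑Ab ∪ {t} : Set G)⁻¹) →
        ∀ x ∈ M, x * L.prod ∈ M := by
      intro L
      induction L with
      | nil => intro _ x hx; simpa using hx
      | cons y L ih =>
          intro hL x hx
          have hy := hL y List.mem_cons_self
          have hxy : x * y ∈ M := by
            rcases hy with (hy | hy) | hy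
            · exact hstepA x hx y hy
            · rw [Set.mem_singleton_iff] at hy; rw [hy]; exact hstepT x hx
            · rw [Set.mem_inv] at hy
              rcases hy with hy | hy
              · have hyA : y ∈ Ab := by
                  have := inv_mem (show y⁻¹ ∈ Ab from hy)
                  simpa using this
                exact hstepA x hx y hyA
              · rw [Set.mem_singleton_iff] at hy
                have hyt : y = t⁻¹ := by rw [← hy]; simp
                rw [hyt]; exact hstepTinv x hx
          have h5 : x * (y :: L).prod = (x * y) * L.prod := by
            rw [List.prod_cons]; group
          rw [h5]
          exact ih (fun z hz => hL z (List.mem_cons_of_mem y hz)) (x * y) hxy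
    intro x
    have hx := hgen x
    have hx' : x ∈ Submonoid.closure ((↑Ab ∪ {t} : Set G) ∪ (↑Ab ∪ {t} : Set G)⁻¹) := by
      rw [← Subgroup.closure_toSubmonoid]; exact hx
    obtain ⟨L, hL, hprod⟩ := Submonoid.exists_list_of_mem_closure hx'
    have := hlist L hL 1 honeM
    rwa [one_mul, hprod] at this
  -- N ≤ H
  have hNineq : N ≤ H := by
    intro n hn
    obtain ⟨h, hh, q, a, ha, hna⟩ := hM n
    have hvaN : vrep q * a ∈ N := by
      have h5 : vrep q * a = h⁻¹ * n := by rw [hna]; group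
      rw [h5]; exact mul_mem (inv_mem (hHN hh)) hn
    have hvH1 : vrep q ∈ H1 := by
      have h6 := mul_mem (hNH1 hvaN) (inv_mem (hAH1 ha))
      simpa using h6
    have hq1 : q = QuotientGroup.mk (1 : G) := by
      rw [← hvrep q, QuotientGroup.eq]
      simpa using inv_mem hvH1
    have hvq : vrep q = 1 := by rw [hq1, hvrep1]
    have haN : a ∈ N := by
      have h7 : a = h⁻¹ * n := by rw [hna, hvq]; group
      rw [h7]; exact mul_mem (inv_mem (hHN hh)) hn
    have haH : a ∈ H := by
      have h8 := hconjH (QuotientGroup.mk (1 : G)) a haN ha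
      rwa [hvrep1, one_mul, inv_one, mul_one] at h8
    have h9 : n = h * a := by rw [hna, hvq]; group
    rw [h9]
    exact mul_mem hh haH
  have hNH' : N = H := le_antisymm hNineq hHN
  rw [Subgroup.fg_iff, hNH']
  exact ⟨S, rfl, hSfin⟩

/-- Let `G = A∗_C` be an HNN extension with base group `A` and associated
subgroups `C` and `D`, and let `N` be a normal subgroup of `G`.  If the subgroup `N ⊔ C`
generated by `N` and `C` has finite index in `G` and `N ⊓ A` is finitely generated, then `N`
is finitely generated. -/
theorem stmt_7 {A : Type*} [Group A] (C D : Subgroup A) (φ : C ≃* D)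
    (N : Subgroup (HNNExtension A C D φ)) (hNnorm : N.Normal)
    (hNCidx : (N ⊔ Subgroup.map (HNNExtension.of : A →* HNNExtension A C D φ) C).FiniteIndex)
    (hNA : (N ⊓ (HNNExtension.of : A →* HNNExtension A C D φ).range).FG) :
    N.FG := by
  apply stmt_7_aux ((HNNExtension.of : A →* HNNExtension A C D φ).range)
    (Subgroup.map (HNNExtension.of : A →* HNNExtension A C D φ) C) HNNExtension.t
    ?_ ?_ ?_ N hNnorm hNCidx hNA
  · rintro x ⟨c, hc, rfl⟩
    exact ⟨c, rfl⟩
  · rintro x ⟨c, hc, rfl⟩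
    exact ⟨(φ ⟨c, hc⟩ : A), HNNExtension.equiv_eq_conj (φ := φ) ⟨c, hc⟩⟩
  · intro g
    induction g using HNNExtension.induction_on with
    | of g => exact Subgroup.subset_closure (Or.inl ⟨g, rfl⟩)
    | t => exact Subgroup.subset_closure (Or.inr rfl)
    | mul x y hx hy => exact mul_mem hx hy
    | inv x hx => exact inv_mem hx
end

section
/- The one-relator group H = ⟨u, y | u y² u y⁻¹⟩ is an infinite cyclic extension of a free group of rank two, and the one-relator group G = ⟨x, y | x² y² x² y⁻¹⟩ is an infinite cyclic extension of a free group of rank four. -/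
/-- `G` is an infinite cyclic extension of a free group of rank `k`: there is a normal
subgroup `N` of `G` which is free of rank `k` with `G ⧸ N` infinite cyclic. -/
def IsInfCyclicExtOfFreeRank (G : Type*) [Group G] (k : ℕ) : Prop :=
  ∃ N : Subgroup G, ∃ hN : N.Normal,
    Nonempty (N ≃* FreeGroup (Fin k)) ∧
    Nonempty ((G ⧸ N) ≃* Multiplicative ℤ)

open SemidirectProduct Multiplicative


-- generic: mk equality from one conjugated relator occurrence
lemma mk_eq_mk {α : Type*} {rels : Set (FreeGroup α)} {r c x y : FreeGroup α}
    (hr : r ∈ rels) (h : x = c * r * c⁻¹ * y ∨ x = c * r⁻¹ * c⁻¹ * y) :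
    PresentedGroup.mk rels x = PresentedGroup.mk rels y := by
  have hN : (Subgroup.normalClosure rels).Normal := Subgroup.normalClosure_normal
  have hm : r ∈ Subgroup.normalClosure rels := Subgroup.subset_normalClosure hr
  have h1 : ∀ z ∈ Subgroup.normalClosure rels, PresentedGroup.mk rels z = 1 := fun z hz =>
    (QuotientGroup.eq_one_iff z).2 hz
  rcases h with h | h <;> rw [h, map_mul] <;>
    [rw [h1 _ (hN.conj_mem _ hm c), one_mul];
     rw [h1 _ (hN.conj_mem _ (inv_mem hm) c), one_mul]]

abbrev r1 : FreeGroup (Fin 2) :=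
  FreeGroup.of 0 * FreeGroup.of 1 ^ 2 * FreeGroup.of 0 * (FreeGroup.of 1)⁻¹
abbrev rels1 : Set (FreeGroup (Fin 2)) := {r1}
abbrev P1 : Type := PresentedGroup rels1

def Amap : FreeGroup (Fin 2) →* FreeGroup (Fin 2) :=
  FreeGroup.lift ![FreeGroup.of 1, FreeGroup.of 1 * (FreeGroup.of 0)⁻¹]
def Bmap : FreeGroup (Fin 2) →* FreeGroup (Fin 2) :=
  FreeGroup.lift ![(FreeGroup.of 1)⁻¹ * FreeGroup.of 0, FreeGroup.of 0]

lemma hBA : Bmap.comp Amap = MonoidHom.id _ :=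
  FreeGroup.ext_hom _ _ (by intro i; fin_cases i <;> simp [Amap, Bmap])
lemma hAB : Amap.comp Bmap = MonoidHom.id _ :=
  FreeGroup.ext_hom _ _ (by intro i; fin_cases i <;> simp [Amap, Bmap])

def αH : MulAut (FreeGroup (Fin 2)) := MonoidHom.toMulEquiv Amap Bmap hBA hAB

@[simp] lemma αH_apply (x : FreeGroup (Fin 2)) : αH x = Amap x := rfl
@[simp] lemma αH_inv_apply (x : FreeGroup (Fin 2)) : αH⁻¹ x = Bmap x := rfl
lemma αH_symm_apply (x : FreeGroup (Fin 2)) : αH.symm x = Bmap x := rfl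

abbrev SDP1 : Type := FreeGroup (Fin 2) ⋊[zpowersHom _ αH] Multiplicative ℤ

lemma phi_ofAdd_one : (zpowersHom _ αH) (ofAdd (1:ℤ)) = αH := by
  simp [zpowersHom_apply]

lemma e1 : (inr (ofAdd (1:ℤ)) : SDP1) * inl (FreeGroup.of 0) * (inr (ofAdd (1:ℤ)))⁻¹
    = inl (FreeGroup.of 1) := by
  have := inl_aut (φ := zpowersHom _ αH) (ofAdd (1:ℤ)) (FreeGroup.of 0)
  rw [phi_ofAdd_one] at this
  simp only [αH_apply, map_inv] at this ⊢
  rw [← this]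
  simp [Amap]

lemma e2 : (inr (ofAdd (1:ℤ)) : SDP1)⁻¹ * inl (FreeGroup.of 0) * inr (ofAdd (1:ℤ))
    = inl ((FreeGroup.of 1)⁻¹ * FreeGroup.of 0) := by
  have := inl_aut_inv (φ := zpowersHom _ αH) (ofAdd (1:ℤ)) (FreeGroup.of 0)
  rw [phi_ofAdd_one] at this
  simp only [map_inv] at this ⊢
  rw [← this]
  have : (αH⁻¹) (FreeGroup.of 0) = (FreeGroup.of 1)⁻¹ * FreeGroup.of 0 := by simp [Bmap, αH_symm_apply]
  rw [← this]

def fimg : Fin 2 → SDP1 :=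
  ![inr (ofAdd (1:ℤ)),
    inl (FreeGroup.of 0) * (inr (ofAdd (1:ℤ)))⁻¹ * (inr (ofAdd (1:ℤ)))⁻¹]

lemma relh : ∀ w ∈ rels1, FreeGroup.lift fimg w = 1 := by
  intro w hw
  rw [Set.mem_singleton_iff] at hw
  subst hw
  simp only [r1, map_mul, map_pow, map_inv, FreeGroup.lift_apply_of, fimg,
    Matrix.cons_val_zero, Matrix.cons_val_one, Matrix.head_cons]
  rw [show (inr (ofAdd (1:ℤ)) : SDP1) *
      (inl (FreeGroup.of 0) * (inr (ofAdd (1:ℤ)))⁻¹ * (inr (ofAdd (1:ℤ)))⁻¹) ^ 2 *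
      inr (ofAdd (1:ℤ)) *
      (inl (FreeGroup.of 0) * (inr (ofAdd (1:ℤ)))⁻¹ * (inr (ofAdd (1:ℤ)))⁻¹)⁻¹
    = (inr (ofAdd (1:ℤ)) * inl (FreeGroup.of 0) * (inr (ofAdd (1:ℤ)))⁻¹) *
      ((inr (ofAdd (1:ℤ)))⁻¹ * inl (FreeGroup.of 0) * inr (ofAdd (1:ℤ))) *
      (inl (FreeGroup.of 0))⁻¹ from by rw [pow_two]; group, e1, e2, ← map_inv, ← map_mul, ← map_mul]
  rw [show (FreeGroup.of 1 * ((FreeGroup.of 1)⁻¹ * FreeGroup.of 0) * (FreeGroup.of 0)⁻¹ :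
    FreeGroup (Fin 2)) = 1 from by group, map_one]

def Φ : P1 →* SDP1 := PresentedGroup.toGroup relh

def u1 : P1 := PresentedGroup.of 0
def y1 : P1 := PresentedGroup.of 1

lemma of_eq_mk1 (i : Fin 2) : (PresentedGroup.of i : P1) = PresentedGroup.mk rels1 (FreeGroup.of i) := rfl

def f1 : FreeGroup (Fin 2) →* P1 :=
  FreeGroup.lift ![y1 * u1 ^ 2, u1 * y1 * u1]
def f2 : Multiplicative ℤ →* P1 := zpowersHom _ u1

lemma s1 : ∀ w, f1 (αH w) = u1 * f1 w * u1⁻¹ := by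
  have : f1.comp αH.toMonoidHom = (MulAut.conj u1).toMonoidHom.comp f1 := by
    apply FreeGroup.ext_hom
    intro i
    fin_cases i
    · simp [f1, Amap]
      group
    · simp [f1, Amap]
      simp only [u1, y1, of_eq_mk1, ← map_mul, ← map_inv, ← map_pow]
      exact mk_eq_mk (c := FreeGroup.of 0) rfl (Or.inr (by group))
  intro w
  have := DFunLike.congr_fun this w
  simpa using this

lemma s2 : ∀ w, f1 (αH⁻¹ w) = u1⁻¹ * f1 w * u1 := by
  have : f1.comp (αH⁻¹ : MulAut _).toMonoidHom = (MulAut.conj u1⁻¹).toMonoidHom.comp f1 := by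
    apply FreeGroup.ext_hom
    intro i
    fin_cases i
    · simp [f1, Bmap]
      simp only [u1, y1, of_eq_mk1, ← map_mul, ← map_inv, ← map_pow]
      exact mk_eq_mk (c := (FreeGroup.of 0)⁻¹ * FreeGroup.of 1 * FreeGroup.of 0 * (FreeGroup.of 1)⁻¹)
        rfl (Or.inr (by group))
    · simp [f1, Bmap, sq, mul_assoc, αH_symm_apply]
  intro w
  have := DFunLike.congr_fun this w
  simpa using this

lemma mainH : ∀ (n : ℤ) (w), f1 ((αH ^ n : MulAut _) w) = u1 ^ n * f1 w * (u1 ^ n)⁻¹ := by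
  intro n
  induction n using Int.induction_on with
  | zero => simp
  | succ k ih =>
    intro w
    have h1 : ((αH ^ ((k : ℤ) + 1) : MulAut _)) w = (αH ^ (k : ℤ) : MulAut _) (αH w) := by
      rw [zpow_add_one]; rfl
    rw [h1, ih, s1]
    group
  | pred k ih =>
    intro w
    have h1 : ((αH ^ (-(k : ℤ) - 1) : MulAut _)) w = (αH ^ (-(k : ℤ)) : MulAut _) (αH⁻¹ w) := by
      rw [zpow_sub_one]; rfl
    rw [h1, ih, s2]
    group

lemma compatH : ∀ g : Multiplicative ℤ,
    f1.comp ((zpowersHom _ αH g : MulAut _)).toMonoidHom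
      = (MulAut.conj (f2 g)).toMonoidHom.comp f1 := by
  intro g
  ext w
  simp only [MonoidHom.comp_apply, MulEquiv.coe_toMonoidHom, zpowersHom_apply, f2,
    ← map_zpow, MulAut.conj_apply]
  exact mainH (toAdd g) (FreeGroup.of w)

def Ψ : SDP1 →* P1 := SemidirectProduct.lift f1 f2 compatH

lemma hΨΦ : Ψ.comp Φ = MonoidHom.id P1 := by
  apply PresentedGroup.ext
  intro i
  fin_cases i
  · simp [Φ, Ψ, fimg, PresentedGroup.toGroup.of, f2, zpowersHom_apply, u1]
  · simp [Φ, Ψ, fimg, PresentedGroup.toGroup.of, f1, f2, zpowersHom_apply, u1, y1,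
      sq, mul_assoc]

lemma hΦΨ : Φ.comp Ψ = MonoidHom.id SDP1 := by
  apply SemidirectProduct.hom_ext
  · apply FreeGroup.ext_hom
    intro i
    fin_cases i
    · simp [Φ, Ψ, fimg, PresentedGroup.toGroup.of, f1, f2, zpowersHom_apply, u1, y1,
        sq, mul_assoc]
    · simp only [MonoidHom.comp_apply, MonoidHom.id_apply]
      simp [Φ, Ψ, fimg, PresentedGroup.toGroup.of, f1, f2, zpowersHom_apply, u1, y1,
        sq, mul_assoc]
      rw [← mul_assoc, e1]
  · apply MonoidHom.ext_mint
    simp [Φ, Ψ, fimg, PresentedGroup.toGroup.of, f2, zpowersHom_apply, u1]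

noncomputable def eH : P1 ≃* SDP1 := MonoidHom.toMulEquiv Φ Ψ hΨΦ hΦΨ

abbrev r2 : FreeGroup (Fin 2) :=
  FreeGroup.of 0 ^ 2 * FreeGroup.of 1 ^ 2 * FreeGroup.of 0 ^ 2 * (FreeGroup.of 1)⁻¹
abbrev rels2 : Set (FreeGroup (Fin 2)) := {r2}
abbrev P2 : Type := PresentedGroup rels2

def AmapG : FreeGroup (Fin 4) →* FreeGroup (Fin 4) :=
  FreeGroup.lift ![FreeGroup.of 1, FreeGroup.of 2, FreeGroup.of 3,
    FreeGroup.of 2 * (FreeGroup.of 0)⁻¹]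
def BmapG : FreeGroup (Fin 4) →* FreeGroup (Fin 4) :=
  FreeGroup.lift ![(FreeGroup.of 3)⁻¹ * FreeGroup.of 1, FreeGroup.of 0,
    FreeGroup.of 1, FreeGroup.of 2]

lemma hBAG : BmapG.comp AmapG = MonoidHom.id _ :=
  FreeGroup.ext_hom _ _ (by intro i; fin_cases i <;> simp [AmapG, BmapG])
lemma hABG : AmapG.comp BmapG = MonoidHom.id _ :=
  FreeGroup.ext_hom _ _ (by intro i; fin_cases i <;> simp [AmapG, BmapG])

def αG : MulAut (FreeGroup (Fin 4)) := MonoidHom.toMulEquiv AmapG BmapG hBAG hABG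

@[simp] lemma αG_apply (x : FreeGroup (Fin 4)) : αG x = AmapG x := rfl
@[simp] lemma αG_inv_apply (x : FreeGroup (Fin 4)) : αG⁻¹ x = BmapG x := rfl
lemma αG_symm_apply (x : FreeGroup (Fin 4)) : αG.symm x = BmapG x := rfl

abbrev SDP2 : Type := FreeGroup (Fin 4) ⋊[zpowersHom _ αG] Multiplicative ℤ

lemma phiG_ofAdd_one : (zpowersHom _ αG) (ofAdd (1:ℤ)) = αG := by
  simp [zpowersHom_apply]

lemma e1G (w : FreeGroup (Fin 4)) :
    (inr (ofAdd (1:ℤ)) : SDP2) * inl w * (inr (ofAdd (1:ℤ)))⁻¹ = inl (AmapG w) := by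
  have := inl_aut (φ := zpowersHom _ αG) (ofAdd (1:ℤ)) w
  rw [phiG_ofAdd_one] at this
  simp only [αG_apply, map_inv] at this ⊢
  rw [← this]

lemma e2G (w : FreeGroup (Fin 4)) :
    (inr (ofAdd (1:ℤ)) : SDP2)⁻¹ * inl w * inr (ofAdd (1:ℤ)) = inl (BmapG w) := by
  have := inl_aut_inv (φ := zpowersHom _ αG) (ofAdd (1:ℤ)) w
  rw [phiG_ofAdd_one] at this
  simp only [map_inv] at this ⊢
  rw [← this]
  rfl

def fimgG : Fin 2 → SDP2 :=
  ![inr (ofAdd (1:ℤ)),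
    inl (FreeGroup.of 0) * (inr (ofAdd (1:ℤ)))⁻¹ * (inr (ofAdd (1:ℤ)))⁻¹ *
      (inr (ofAdd (1:ℤ)))⁻¹ * (inr (ofAdd (1:ℤ)))⁻¹]

lemma relG : ∀ w ∈ rels2, FreeGroup.lift fimgG w = 1 := by
  intro w hw
  rw [Set.mem_singleton_iff] at hw
  subst hw
  simp only [r2, map_mul, map_pow, map_inv, FreeGroup.lift_apply_of, fimgG,
    Matrix.cons_val_zero, Matrix.cons_val_one, Matrix.head_cons]
  rw [show (inr (ofAdd (1:ℤ)) : SDP2) ^ 2 *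
      (inl (FreeGroup.of 0) * (inr (ofAdd (1:ℤ)))⁻¹ * (inr (ofAdd (1:ℤ)))⁻¹ *
        (inr (ofAdd (1:ℤ)))⁻¹ * (inr (ofAdd (1:ℤ)))⁻¹) ^ 2 *
      inr (ofAdd (1:ℤ)) ^ 2 *
      (inl (FreeGroup.of 0) * (inr (ofAdd (1:ℤ)))⁻¹ * (inr (ofAdd (1:ℤ)))⁻¹ *
        (inr (ofAdd (1:ℤ)))⁻¹ * (inr (ofAdd (1:ℤ)))⁻¹)⁻¹
    = (inr (ofAdd (1:ℤ)) * (inr (ofAdd (1:ℤ)) * inl (FreeGroup.of 0) * (inr (ofAdd (1:ℤ)))⁻¹) *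
        (inr (ofAdd (1:ℤ)))⁻¹) *
      ((inr (ofAdd (1:ℤ)))⁻¹ * ((inr (ofAdd (1:ℤ)))⁻¹ * inl (FreeGroup.of 0) *
        inr (ofAdd (1:ℤ))) * inr (ofAdd (1:ℤ))) *
      (inl (FreeGroup.of 0))⁻¹ from by simp only [pow_two]; group; simp only [zpow_two, pow_two, mul_assoc],
    e1G, e1G, e2G, e2G, ← map_inv, ← map_mul, ← map_mul]
  rw [show (AmapG (AmapG (FreeGroup.of 0)) * BmapG (BmapG (FreeGroup.of 0)) *
      (FreeGroup.of 0)⁻¹ : FreeGroup (Fin 4)) = 1 from by simp [AmapG, BmapG], map_one]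

def ΦG : P2 →* SDP2 := PresentedGroup.toGroup relG

def u2 : P2 := PresentedGroup.of 0
def y2 : P2 := PresentedGroup.of 1

lemma of_eq_mk2 (i : Fin 2) :
    (PresentedGroup.of i : P2) = PresentedGroup.mk rels2 (FreeGroup.of i) := rfl

def f1G : FreeGroup (Fin 4) →* P2 :=
  FreeGroup.lift ![y2 * u2 ^ 4, u2 * y2 * u2 ^ 3, u2 ^ 2 * y2 * u2 ^ 2, u2 ^ 3 * y2 * u2]
def f2G : Multiplicative ℤ →* P2 := zpowersHom _ u2

lemma s1G : ∀ w, f1G (αG w) = u2 * f1G w * u2⁻¹ := by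
  have : f1G.comp αG.toMonoidHom = (MulAut.conj u2).toMonoidHom.comp f1G := by
    apply FreeGroup.ext_hom
    intro i
    fin_cases i
    · simp [f1G, AmapG]
      group
      all_goals simp [pow_two, zpow_two, mul_assoc]
    · simp [f1G, AmapG]
      group
      all_goals simp [pow_two, zpow_two, mul_assoc]
    · simp [f1G, AmapG]
      group
      all_goals simp [pow_two, zpow_two, mul_assoc]
    · simp [f1G, AmapG]
      simp only [u2, y2, of_eq_mk2, ← map_mul, ← map_inv, ← map_pow]
      exact mk_eq_mk (c := FreeGroup.of 0 ^ 2) rfl (Or.inr (by group))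
  intro w
  have := DFunLike.congr_fun this w
  simpa using this

lemma s2G : ∀ w, f1G (αG⁻¹ w) = u2⁻¹ * f1G w * u2 := by
  have : f1G.comp (αG⁻¹ : MulAut _).toMonoidHom = (MulAut.conj u2⁻¹).toMonoidHom.comp f1G := by
    apply FreeGroup.ext_hom
    intro i
    fin_cases i
    · simp [f1G, BmapG]
      simp only [u2, y2, of_eq_mk2, ← map_mul, ← map_inv, ← map_pow]
      exact mk_eq_mk
        (c := (FreeGroup.of 0)⁻¹ * FreeGroup.of 1 * FreeGroup.of 0 ^ 2 * (FreeGroup.of 1)⁻¹)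
        rfl (Or.inr (by group))
    · simp [f1G, BmapG, αG_symm_apply]
      group
      all_goals simp [pow_two, zpow_two, mul_assoc]
    · simp [f1G, BmapG, αG_symm_apply]
      group
      all_goals simp [pow_two, zpow_two, mul_assoc]
    · simp [f1G, BmapG, αG_symm_apply]
      group
      all_goals simp [pow_two, zpow_two, mul_assoc]
  intro w
  have := DFunLike.congr_fun this w
  simpa using this

lemma mainG : ∀ (n : ℤ) (w), f1G ((αG ^ n : MulAut _) w) = u2 ^ n * f1G w * (u2 ^ n)⁻¹ := by
  intro n
  induction n using Int.induction_on with
  | zero => simp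
  | succ k ih =>
    intro w
    have h1 : ((αG ^ ((k : ℤ) + 1) : MulAut _)) w = (αG ^ (k : ℤ) : MulAut _) (αG w) := by
      rw [zpow_add_one]; rfl
    rw [h1, ih, s1G]
    group
  | pred k ih =>
    intro w
    have h1 : ((αG ^ (-(k : ℤ) - 1) : MulAut _)) w = (αG ^ (-(k : ℤ)) : MulAut _) (αG⁻¹ w) := by
      rw [zpow_sub_one]; rfl
    rw [h1, ih, s2G]
    group

lemma compatG : ∀ g : Multiplicative ℤ,
    f1G.comp ((zpowersHom _ αG g : MulAut _)).toMonoidHom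
      = (MulAut.conj (f2G g)).toMonoidHom.comp f1G := by
  intro g
  ext w
  simp only [MonoidHom.comp_apply, MulEquiv.coe_toMonoidHom, zpowersHom_apply, f2G,
    ← map_zpow, MulAut.conj_apply]
  exact mainG (toAdd g) (FreeGroup.of w)

def ΨG : SDP2 →* P2 := SemidirectProduct.lift f1G f2G compatG

lemma hΨΦG : ΨG.comp ΦG = MonoidHom.id P2 := by
  apply PresentedGroup.ext
  intro i
  fin_cases i
  · simp [ΦG, ΨG, fimgG, PresentedGroup.toGroup.of, f2G, zpowersHom_apply, u2]
  · simp [ΦG, ΨG, fimgG, PresentedGroup.toGroup.of, f1G, f2G, zpowersHom_apply, u2, y2,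
      pow_succ, mul_assoc]

lemma hΦΨG : ΦG.comp ΨG = MonoidHom.id SDP2 := by
  apply SemidirectProduct.hom_ext
  · apply FreeGroup.ext_hom
    intro i
    fin_cases i
    · simp [ΦG, ΨG, fimgG, PresentedGroup.toGroup.of, f1G, f2G, zpowersHom_apply, u2, y2,
        pow_succ, mul_assoc]
    · simp [ΦG, ΨG, fimgG, PresentedGroup.toGroup.of, f1G, f2G, zpowersHom_apply, u2, y2,
        pow_succ, mul_assoc]
      rw [← mul_assoc, e1G]
      simp [AmapG]
    · simp [ΦG, ΨG, fimgG, PresentedGroup.toGroup.of, f1G, f2G, zpowersHom_apply, u2, y2,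
        pow_succ, mul_assoc]
      rw [show (SemidirectProduct.inr (Multiplicative.ofAdd (1:ℤ)) : SDP2) * ((SemidirectProduct.inr (Multiplicative.ofAdd (1:ℤ)) : SDP2) * (SemidirectProduct.inl (FreeGroup.of 0) * ((SemidirectProduct.inr (Multiplicative.ofAdd (1:ℤ)) : SDP2)⁻¹ * (SemidirectProduct.inr (Multiplicative.ofAdd (1:ℤ)) : SDP2)⁻¹))) = (SemidirectProduct.inr (Multiplicative.ofAdd (1:ℤ)) : SDP2) * ((SemidirectProduct.inr (Multiplicative.ofAdd (1:ℤ)) : SDP2) * SemidirectProduct.inl (FreeGroup.of 0) * (SemidirectProduct.inr (Multiplicative.ofAdd (1:ℤ)) : SDP2)⁻¹) * (SemidirectProduct.inr (Multiplicative.ofAdd (1:ℤ)) : SDP2)⁻¹ from by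
        simp only [mul_assoc], e1G, e1G]
      simp [AmapG]
    · simp [ΦG, ΨG, fimgG, PresentedGroup.toGroup.of, f1G, f2G, zpowersHom_apply, u2, y2,
        pow_succ, mul_assoc]
      rw [show (SemidirectProduct.inr (Multiplicative.ofAdd (1:ℤ)) : SDP2) * ((SemidirectProduct.inr (Multiplicative.ofAdd (1:ℤ)) : SDP2) * ((SemidirectProduct.inr (Multiplicative.ofAdd (1:ℤ)) : SDP2) * (SemidirectProduct.inl (FreeGroup.of 0) * ((SemidirectProduct.inr (Multiplicative.ofAdd (1:ℤ)) : SDP2)⁻¹ * ((SemidirectProduct.inr (Multiplicative.ofAdd (1:ℤ)) : SDP2)⁻¹ * (SemidirectProduct.inr (Multiplicative.ofAdd (1:ℤ)) : SDP2)⁻¹))))) = (SemidirectProduct.inr (Multiplicative.ofAdd (1:ℤ)) : SDP2) * ((SemidirectProduct.inr (Multiplicative.ofAdd (1:ℤ)) : SDP2) * ((SemidirectProduct.inr (Multiplicative.ofAdd (1:ℤ)) : SDP2) * SemidirectProduct.inl (FreeGroup.of 0) * (SemidirectProduct.inr (Multiplicative.ofAdd (1:ℤ)) : SDP2)⁻¹)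 * (SemidirectProduct.inr (Multiplicative.ofAdd (1:ℤ)) : SDP2)⁻¹) * (SemidirectProduct.inr (Multiplicative.ofAdd (1:ℤ)) : SDP2)⁻¹ from by
        simp only [mul_assoc], e1G, e1G, e1G]
      simp [AmapG]
  · apply MonoidHom.ext_mint
    simp [ΦG, ΨG, fimgG, PresentedGroup.toGroup.of, f2G, zpowersHom_apply, u2]


noncomputable def eG : P2 ≃* SDP2 := MonoidHom.toMulEquiv ΦG ΨG hΨΦG hΦΨG

lemma helper {P : Type*} [Group P] {k : ℕ}
    {φ : Multiplicative ℤ →* MulAut (FreeGroup (Fin k))}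
    (e : P ≃* FreeGroup (Fin k) ⋊[φ] Multiplicative ℤ) :
    IsInfCyclicExtOfFreeRank P k := by
  let f : P →* Multiplicative ℤ := rightHom.comp e.toMonoidHom
  have hker : f.ker = Subgroup.map e.symm.toMonoidHom rightHom.ker := by
    rw [← MonoidHom.comap_ker, ← Subgroup.comap_equiv_eq_map_symm']
  refine ⟨f.ker, inferInstance, ⟨?_⟩, ⟨?_⟩⟩
  · exact ((MonoidHom.ofInjective inl_injective).trans
      ((MulEquiv.subgroupCongr (range_inl_eq_ker_rightHom (φ := φ))).trans
        ((e.symm.subgroupMap rightHom.ker).trans (MulEquiv.subgroupCongr hker.symm)))).symm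
  · exact QuotientGroup.quotientKerEquivOfSurjective f
      (rightHom_surjective.comp e.surjective)



/-- The one-relator group `H = ⟨u, y | u y² u y⁻¹⟩` is an infinite cyclic
extension of a free group of rank two, and the one-relator group `G = ⟨x, y | x² y² x² y⁻¹⟩`
is an infinite cyclic extension of a free group of rank four.  (Generators: `0` is `u`
resp. `x`, and `1` is `y`.) -/
theorem stmt_19 :
    IsInfCyclicExtOfFreeRank
      (PresentedGroup ({FreeGroup.of 0 * FreeGroup.of 1 ^ 2 * FreeGroup.of 0 *
        (FreeGroup.of 1)⁻¹} : Set (FreeGroup (Fin 2)))) 2 ∧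
    IsInfCyclicExtOfFreeRank
      (PresentedGroup ({FreeGroup.of 0 ^ 2 * FreeGroup.of 1 ^ 2 * FreeGroup.of 0 ^ 2 *
        (FreeGroup.of 1)⁻¹} : Set (FreeGroup (Fin 2)))) 4 := by
  exact ⟨helper eH, helper eG⟩
end
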